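/- Let n ≥ 1, let G be the Heisenberg group over ℤ/nℤ, i.e. the group of triples (a,b,c) ∈ (ℤ/nℤ)³ with multiplication (a,b,c)(a',b',c') = (a+a', b+b', c+c'+ab'), and let N = {(0,0,c)} ≅ ℤ/nℤ be its center. Suppose k contains a primitive n-th root of unity ζ, and let χ : N → k* be the character sending (0,0,1) to ζ. Then there exists an irreducible finite-dimensional k-representation V_ζ of G of dimension n on which N acts by the character χ; any two irreducible finite-dimensional k-representations of G on which N acts by χ are isomorphic; and every finite-dimensional k-representation of G whose restriction to N is χ-isotypic admits a nonzero G-equivariant morphism from V_ζ. -/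

import Mathlib

/-- The Heisenberg group over `ℤ/nℤ`: triples `(a, b, c)` with multiplication
`(a,b,c)(a',b',c') = (a+a', b+b', c+c'+ab')`. -/
@[ext]
structure Heis (n : ℕ) where
  a : ZMod n
  b : ZMod n
  c : ZMod n

namespace Heis

variable {n : ℕ}

instance : Mul (Heis n) :=
  ⟨fun x y => ⟨x.a + y.a, x.b + y.b, x.c + y.c + x.a * y.b⟩⟩

instance : One (Heis n) := ⟨⟨0, 0, 0⟩⟩

instance : Inv (Heis n) :=
  ⟨fun x => ⟨-x.a, -x.b, -x.c + x.a * x.b⟩⟩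

@[simp] lemma mul_a (x y : Heis n) : (x * y).a = x.a + y.a := rfl
@[simp] lemma mul_b (x y : Heis n) : (x * y).b = x.b + y.b := rfl
@[simp] lemma mul_c (x y : Heis n) : (x * y).c = x.c + y.c + x.a * y.b := rfl
@[simp] lemma one_a : (1 : Heis n).a = 0 := rfl
@[simp] lemma one_b : (1 : Heis n).b = 0 := rfl
@[simp] lemma one_c : (1 : Heis n).c = 0 := rfl
@[simp] lemma inv_a (x : Heis n) : x⁻¹.a = -x.a := rfl
@[simp] lemma inv_b (x : Heis n) : x⁻¹.b = -x.b := rfl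
@[simp] lemma inv_c (x : Heis n) : x⁻¹.c = -x.c + x.a * x.b := rfl

instance instGroup : Group (Heis n) where
  mul_assoc x y z := by ext <;> simp <;> ring
  one_mul x := by ext <;> simp
  mul_one x := by ext <;> simp
  inv_mul_cancel x := by ext <;> simp

end Heis

/-- Irreducibility of a representation: the space is nonzero and has no nontrivial
invariant subspace. -/
def IrredRep {k G V : Type} [CommRing k] [Monoid G] [AddCommGroup V] [Module k V]
    (ρ : Representation k G V) : Prop :=
  Nontrivial V ∧ ∀ p : Submodule k V, (∀ g : G, ∀ v ∈ p, ρ g v ∈ p) → p = ⊥ ∨ p = ⊤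

section StoneVN

set_option linter.unusedSectionVars false

variable {k : Type} [Field k] {n : ℕ} [NeZero n]

/-- The character `x ↦ ζ^x` of `ZMod n`. -/
def chi (ζ : k) (x : ZMod n) : k := ζ ^ x.val

lemma chi_add {ζ : k} (hζn : ζ ^ n = 1) (x y : ZMod n) :
    chi ζ (x + y) = chi ζ x * chi ζ y := by
  unfold chi
  rw [ZMod.val_add, ← pow_eq_pow_mod _ hζn, pow_add]

@[simp] lemma chi_zero {ζ : k} : chi ζ (0 : ZMod n) = 1 := by
  simp [chi, ZMod.val_zero]

lemma chi_one {ζ : k} (hζn : ζ ^ n = 1) : chi ζ (1 : ZMod n) = ζ := by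
  have : (1 : ZMod n).val = 1 % n := ZMod.val_one_eq_one_mod n
  rw [chi, this, ← pow_eq_pow_mod _ hζn, pow_one]

lemma chi_natmul {ζ : k} (hζn : ζ ^ n = 1) (m : ℕ) (y : ZMod n) :
    chi ζ ((m : ZMod n) * y) = chi ζ y ^ m := by
  induction m with
  | zero => simp
  | succ m ih =>
    push_cast
    rw [add_mul, one_mul, chi_add hζn, ih, pow_succ]

lemma chi_pow_n {ζ : k} (hζn : ζ ^ n = 1) (y : ZMod n) : chi ζ y ^ n = 1 := by
  rw [← chi_natmul hζn, ZMod.natCast_self, zero_mul, chi_zero]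

lemma chi_ne_one {ζ : k} (hζ : IsPrimitiveRoot ζ n) {y : ZMod n} (hy : y ≠ 0) :
    chi ζ y ≠ 1 := by
  intro h
  have hdvd : n ∣ y.val := hζ.dvd_of_pow_eq_one _ h
  have hlt : y.val < n := ZMod.val_lt y
  have hv : y.val = 0 := Nat.eq_zero_of_dvd_of_lt hdvd hlt
  exact hy (by rwa [← ZMod.val_eq_zero])

lemma chi_geom_sum {ζ : k} (hζ : IsPrimitiveRoot ζ n) (y : ZMod n) :
    ∑ j ∈ Finset.range n, chi ζ y ^ j = if y = 0 then (n : k) else 0 := by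
  by_cases hy : y = 0
  · simp [hy]
  · rw [if_neg hy]
    have h1 : chi ζ y - 1 ≠ 0 := sub_ne_zero.mpr (chi_ne_one hζ hy)
    have := geom_sum_mul (chi ζ y) n
    rw [chi_pow_n hζ.pow_eq_one, sub_self] at this
    exact (mul_eq_zero.mp this).resolve_right h1

/-- The Schrödinger representation of the Heisenberg group on `ZMod n → k`. -/
def heisRep (ζ : k) (hζn : ζ ^ n = 1) : Representation k (Heis n) (ZMod n → k) where
  toFun g :=
    { toFun := fun φ x => chi ζ (g.c + g.b * x) * φ (x + g.a)
      map_add' := fun φ ψ => by funext x; simp [mul_add]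
      map_smul' := fun r φ => by
        funext x
        simp only [Pi.smul_apply, smul_eq_mul, RingHom.id_apply]
        ring }
  map_one' := by
    ext φ x
    simp
  map_mul' g h := by
    ext φ x
    simp only [LinearMap.coe_mk, AddHom.coe_mk, Module.End.mul_apply,
      LinearMap.coe_comp, Function.comp_apply, Heis.mul_a, Heis.mul_b, Heis.mul_c]
    rw [show g.c + h.c + g.a * h.b + (g.b + h.b) * x
        = (g.c + g.b * x) + (h.c + h.b * (x + g.a)) by ring, chi_add hζn, mul_assoc,
      add_assoc]

lemma heisRep_apply (ζ : k) (hζn : ζ ^ n = 1) (g : Heis n) (φ : ZMod n → k) (x : ZMod n) :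
    heisRep ζ hζn g φ x = chi ζ (g.c + g.b * x) * φ (x + g.a) := rfl


def delta (x : ZMod n) : ZMod n → k := fun j => if x = j then 1 else 0

lemma heisRep_delta (ζ : k) (hζn : ζ ^ n = 1) (a x : ZMod n) :
    heisRep ζ hζn ⟨a, 0, 0⟩ (delta x) = (delta (x - a) : ZMod n → k) := by
  funext y
  rw [heisRep_apply]
  have h0 : chi ζ ((⟨a,0,0⟩ : Heis n).c + (⟨a,0,0⟩ : Heis n).b * y) = 1 := by
    show chi ζ (0 + 0 * y) = 1; simp
  rw [h0, one_mul]
  show (if x = y + a then (1:k) else 0) = (if x - a = y then 1 else 0)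
  have : (x = y + a) ↔ (x - a = y) := by constructor <;> intro h <;> [rw [h]; rw [← h]] <;> ring
  simp [this]

lemma heisRep_irred [CharZero k] {ζ : k} (hζ : IsPrimitiveRoot ζ n) :
    IrredRep (heisRep ζ hζ.pow_eq_one) := by
  refine ⟨inferInstance, fun p hp => ?_⟩
  rcases eq_or_ne p ⊥ with h | h
  · exact Or.inl h
  refine Or.inr ?_
  obtain ⟨f, hfp, hf0⟩ := (Submodule.ne_bot_iff p).mp h
  obtain ⟨x₀, hx₀⟩ : ∃ x₀, f x₀ ≠ 0 := by
    by_contra hc; push_neg at hc; exact hf0 (funext hc)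
  set hζn := hζ.pow_eq_one with hζndef
  -- Fourier projection onto the x₀ coordinate
  set g : ZMod n → k := ∑ j ∈ Finset.range n,
    chi ζ (-(j : ZMod n) * x₀) • heisRep ζ hζn ⟨0, (j : ZMod n), 0⟩ f with hg
  have hgp : g ∈ p := Submodule.sum_mem p fun j _ =>
    Submodule.smul_mem p _ (hp _ f hfp)
  have hgval : ∀ x, g x = f x * (if x - x₀ = 0 then (n : k) else 0) := by
    intro x
    rw [hg]
    rw [← chi_geom_sum hζ (x - x₀)]
    rw [Finset.sum_apply, Finset.mul_sum]
    refine Finset.sum_congr rfl fun j _ => ?_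
    rw [Pi.smul_apply, smul_eq_mul, heisRep_apply]
    show chi ζ (-(j:ZMod n) * x₀) * (chi ζ (0 + (j:ZMod n) * x) * f (x + 0)) = _
    rw [← chi_natmul hζn j (x - x₀), zero_add, add_zero]
    have he : (j : ZMod n) * (x - x₀) = (-(j : ZMod n) * x₀) + ((j : ZMod n) * x) := by ring
    rw [he, chi_add hζn]
    ring
  have hc0 : (n : k) * f x₀ ≠ 0 :=
    mul_ne_zero (Nat.cast_ne_zero.mpr (NeZero.ne n)) hx₀
  have hδ : (delta x₀ : ZMod n → k) ∈ p := by
    have hgδ : g = ((n : k) * f x₀) • (delta x₀ : ZMod n → k) := by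
      funext x
      rw [hgval x]
      show _ = ((n:k) * f x₀) * (if x₀ = x then 1 else 0)
      by_cases hx : x = x₀
      · subst hx; simp [mul_comm]
      · rw [if_neg (sub_ne_zero.mpr hx), if_neg (fun hc => hx hc.symm)]; ring
    have := Submodule.smul_mem p ((n : k) * f x₀)⁻¹ hgp
    rwa [hgδ, smul_smul, inv_mul_cancel₀ hc0, one_smul] at this
  have hδall : ∀ y : ZMod n, (delta y : ZMod n → k) ∈ p := by
    intro y
    have := hp ⟨x₀ - y, 0, 0⟩ _ hδ
    rwa [heisRep_delta, sub_sub_cancel] at this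
  rw [Submodule.eq_top_iff']
  intro φ
  rw [pi_eq_sum_univ φ]
  exact Submodule.sum_mem p fun i _ => Submodule.smul_mem p _ (hδall i)

lemma heisRep_center {ζ : k} (hζn : ζ ^ n = 1) :
    heisRep ζ hζn ⟨0, 0, 1⟩ = ζ • LinearMap.id := by
  refine LinearMap.ext fun φ => funext fun x => ?_
  show chi ζ (1 + 0 * x) * φ (x + 0) = ζ * φ x
  rw [zero_mul, add_zero, add_zero, chi_one hζn]

lemma heis_pow_a (m : ℕ) : (⟨1, 0, 0⟩ : Heis n) ^ m = ⟨(m : ZMod n), 0, 0⟩ := by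
  induction m with
  | zero => ext <;> simp
  | succ m ih => rw [pow_succ, ih]; ext <;> simp
lemma heis_pow_b (m : ℕ) : (⟨0, 1, 0⟩ : Heis n) ^ m = ⟨0, (m : ZMod n), 0⟩ := by
  induction m with
  | zero => ext <;> simp
  | succ m ih => rw [pow_succ, ih]; ext <;> simp
lemma heis_pow_c (m : ℕ) : (⟨0, 0, 1⟩ : Heis n) ^ m = ⟨0, 0, (m : ZMod n)⟩ := by
  induction m with
  | zero => ext <;> simp
  | succ m ih => rw [pow_succ, ih]; ext <;> simp

lemma equivariant_bijective {G V W : Type} [Monoid G] [AddCommGroup V] [Module k V]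
    [AddCommGroup W] [Module k W] {ρV : Representation k G V} {ρW : Representation k G W}
    (hV : IrredRep ρV) (hW : IrredRep ρW) (f : V →ₗ[k] W) (hf : f ≠ 0)
    (hfe : ∀ g v, f (ρV g v) = ρW g (f v)) : Function.Bijective f := by
  constructor
  · rw [← LinearMap.ker_eq_bot]
    rcases hV.2 (LinearMap.ker f) (fun g v hv => by
      rw [LinearMap.mem_ker] at hv ⊢; rw [hfe, hv, map_zero]) with h | h
    · exact h
    · exact absurd (LinearMap.ker_eq_top.mp h) hf
  · rw [← LinearMap.range_eq_top]
    rcases hW.2 (LinearMap.range f) (fun g w hw => by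
      obtain ⟨v, rfl⟩ := hw; exact ⟨ρV g v, hfe g v⟩) with h | h
    · exact absurd (LinearMap.range_eq_bot.mp h) hf
    · exact h

/-- Key construction: every nontrivial fin.dim. rep of the Heisenberg group on which the
centre acts by `ζ` receives a nonzero equivariant map from the Schrödinger representation. -/
lemma exists_equivariant {ζ : k} (hζ : IsPrimitiveRoot ζ n) (W : FDRep k (Heis n))
    (hWnt : Nontrivial W) (hW : W.ρ ⟨0, 0, 1⟩ = ζ • LinearMap.id) :
    ∃ f : (ZMod n → k) →ₗ[k] W, f ≠ 0 ∧
      ∀ (g : Heis n) (φ : ZMod n → k),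
        f (heisRep ζ hζ.pow_eq_one g φ) = W.ρ g (f φ) := by
  classical
  have hζn := hζ.pow_eq_one
  have hζ0 : ζ ≠ 0 := fun h => by
    rw [h, zero_pow (NeZero.ne n)] at hζn; exact zero_ne_one hζn
  set A : W →ₗ[k] W := W.ρ ⟨1, 0, 0⟩ with hA
  set B : W →ₗ[k] W := W.ρ ⟨0, 1, 0⟩ with hB
  have hAn : A ^ n = 1 := by
    rw [hA, ← map_pow, heis_pow_a, ZMod.natCast_self, show ((⟨0,0,0⟩ : Heis n)) = 1 from rfl,
      map_one]
  have hBn : B ^ n = 1 := by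
    rw [hB, ← map_pow, heis_pow_b, ZMod.natCast_self, show ((⟨0,0,0⟩ : Heis n)) = 1 from rfl,
      map_one]
  -- commutation relation
  have hABmul : A * B = ζ • (B * A) := by
    rw [hA, hB, ← map_mul, ← map_mul]
    have h1 : (⟨1,0,0⟩ : Heis n) * ⟨0,1,0⟩ = ⟨0,0,1⟩ * (⟨0,1,0⟩ * ⟨1,0,0⟩) := by
      ext <;> simp
    rw [h1, map_mul, hW]
    ext v
    simp [Module.End.mul_apply]
  have hBA : ∀ (u : W) (μ : k), B u = μ • u → B (A u) = (ζ⁻¹ * μ) • A u := by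
    intro u μ hu
    have h1 : A (B u) = ζ • B (A u) := by
      have := congrArg (fun (T : W →ₗ[k] W) => T u) hABmul
      simpa [Module.End.mul_apply] using this
    have h2 : A (B u) = μ • A u := by rw [hu, map_smul]
    have h3 : ζ • B (A u) = μ • A u := by rw [← h1, h2]
    calc B (A u) = (ζ⁻¹ * ζ) • B (A u) := by rw [inv_mul_cancel₀ hζ0, one_smul]
    _ = ζ⁻¹ • (ζ • B (A u)) := by rw [smul_smul]
    _ = (ζ⁻¹ * μ) • A u := by rw [h3, smul_smul]
  -- eigenvector of B with eigenvalue ζ ^ j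
  obtain ⟨j, hjn, v₀, hv₀ne, hv₀⟩ :
      ∃ j, j < n ∧ ∃ v₀ : W, v₀ ≠ 0 ∧ B v₀ = (ζ ^ j) • v₀ := by
    have hBint : IsIntegral k (B : Module.End k W) :=
      Algebra.IsIntegral.isIntegral (R := k) B
    have haev : (Polynomial.aeval (B : Module.End k W))
        (Polynomial.X ^ n - Polynomial.C (1:k)) = 0 := by
      rw [map_sub, Polynomial.aeval_X_pow, Polynomial.aeval_C, map_one, hBn, sub_self]
    have hdvd : minpoly k (B : Module.End k W) ∣ Polynomial.X ^ n - Polynomial.C (1:k) :=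
      minpoly.dvd _ _ haev
    have hne : (Polynomial.X ^ n - Polynomial.C (1:k)) ≠ 0 :=
      Polynomial.X_pow_sub_C_ne_zero (NeZero.pos n) 1
    have hsp : (minpoly k (B : Module.End k W)).Splits :=
      Polynomial.Splits.of_dvd (Polynomial.X_pow_sub_one_splits hζ) hne hdvd
    have hdeg : (minpoly k (B : Module.End k W)).degree ≠ 0 :=
      (minpoly.degree_pos hBint).ne'
    obtain ⟨μ, hμ⟩ := Polynomial.Splits.exists_eval_eq_zero hsp hdeg
    have hμ' : Polynomial.eval μ (minpoly k (B : Module.End k W)) = 0 := by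
      rw [Polynomial.eval]; exact hμ
    have heig := Module.End.hasEigenvalue_of_isRoot (f := (B : Module.End k W)) (μ := μ) hμ
    obtain ⟨v₀, hv₀⟩ := heig.exists_hasEigenvector
    have hμn : μ ^ n = 1 := by
      obtain ⟨q, hq⟩ := hdvd
      have : Polynomial.eval μ (Polynomial.X ^ n - Polynomial.C (1:k)) = 0 := by
        rw [hq, Polynomial.eval_mul, hμ', zero_mul]
      simpa [sub_eq_zero] using this
    obtain ⟨i, hin, hiμ⟩ := hζ.eq_pow_of_pow_eq_one hμn
    exact ⟨i, hin, v₀, hv₀.2, by rw [hiμ]; exact hv₀.apply_eq_smul⟩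
  -- injectivity of A
  have hAinv : W.ρ (⟨1,0,0⟩ : Heis n)⁻¹ * A = 1 := by
    rw [hA, ← map_mul, inv_mul_cancel, map_one]
  have hAinj : Function.Injective A := by
    intro u u' h
    have := congrArg (W.ρ (⟨1,0,0⟩ : Heis n)⁻¹) h
    rwa [← Module.End.mul_apply, ← Module.End.mul_apply, hAinv, Module.End.one_apply,
      Module.End.one_apply] at this
  -- descend to an eigenvector of eigenvalue 1
  have hstep : ∀ (m : ℕ) (u : W) (μ : k), B u = μ • u →
      B ((A ^ m) u) = (ζ⁻¹ ^ m * μ) • (A ^ m) u := by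
    intro m
    induction m with
    | zero => intro u μ hu; simpa using hu
    | succ m ih =>
      intro u μ hu
      have h1 := hBA ((A ^ m) u) (ζ⁻¹ ^ m * μ) (ih u μ hu)
      have h2 : (A ^ (m+1)) u = A ((A ^ m) u) := by rw [pow_succ']; rfl
      rw [h2, h1]
      congr 1
      rw [pow_succ]
      ring
  -- eigenvector with eigenvalue 1
  set v : W := (A ^ j) v₀ with hv
  have hvne : v ≠ 0 := by
    have hAm : ∀ (m : ℕ) (u : W), (A ^ m) u = 0 → u = 0 := by
      intro m
      induction m with
      | zero => intro u h; simpa using h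
      | succ m ih =>
        intro u h
        have h2 : (A ^ (m+1)) u = (A ^ m) (A u) := by rw [pow_succ]; rfl
        rw [h2] at h
        exact hAinj (by rw [map_zero]; exact ih (A u) h)
    intro h
    exact hv₀ne (hAm j v₀ h)
  have hBv : B v = v := by
    have h1 := hstep j v₀ (ζ ^ j) hv₀
    rw [← hv] at h1
    rw [h1, inv_pow, inv_mul_cancel₀ (pow_ne_zero j hζ0), one_smul]
  -- the family of translated vectors
  set Apw : ZMod n → (W →ₗ[k] W) := fun x => A ^ x.val with hApw
  have hApw_add : ∀ x y : ZMod n, Apw (x + y) = Apw x * Apw y := by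
    intro x y
    show A ^ (x + y).val = A ^ x.val * A ^ y.val
    rw [ZMod.val_add, ← pow_eq_pow_mod _ hAn, pow_add]
  have hρa : ∀ a : ZMod n, W.ρ ⟨a, 0, 0⟩ = Apw a := by
    intro a
    show _ = A ^ a.val
    rw [hA, ← map_pow, heis_pow_a, ZMod.natCast_rightInverse a]
  have hρb : ∀ b : ZMod n, W.ρ ⟨0, b, 0⟩ = B ^ b.val := by
    intro b
    rw [hB, ← map_pow, heis_pow_b, ZMod.natCast_rightInverse b]
  have hρc : ∀ c : ZMod n, W.ρ ⟨0, 0, c⟩ = chi ζ c • (1 : W →ₗ[k] W) := by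
    intro c
    conv_lhs => rw [← ZMod.natCast_rightInverse c]
    rw [← heis_pow_c, map_pow, hW, smul_pow, show (LinearMap.id : W →ₗ[k] W) = 1 from rfl,
      one_pow]
    rfl
  have hdecomp : ∀ g : Heis n, g = (⟨0,0,g.c⟩ : Heis n) * ⟨0,g.b,0⟩ * ⟨g.a,0,0⟩ := by
    intro g; ext <;> simp
  set w : ZMod n → W := fun x => Apw (-x) v with hwdef
  have hw0 : w 0 = v := by
    show Apw (-0) v = v
    rw [neg_zero]
    show (A ^ (0 : ZMod n).val) v = v
    rw [ZMod.val_zero, pow_zero]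
    rfl
  have hAw : ∀ a x : ZMod n, W.ρ ⟨a,0,0⟩ (w x) = w (x - a) := by
    intro a x
    show W.ρ ⟨a,0,0⟩ (Apw (-x) v) = Apw (-(x - a)) v
    rw [hρa, ← Module.End.mul_apply, ← hApw_add, show a + -x = -(x - a) by ring]
  have hBw : ∀ x : ZMod n, B (w x) = chi ζ x • w x := by
    intro x
    have h1 := hstep ((-x).val) v 1 (by rw [hBv, one_smul])
    rw [mul_one] at h1
    show B ((A ^ (-x).val) v) = chi ζ x • (A ^ (-x).val) v
    rw [h1]
    congr 1
    have hchi : chi ζ (-x) * chi ζ x = 1 := by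
      rw [← chi_add hζn, neg_add_cancel, chi_zero]
    rw [inv_pow]
    exact inv_eq_of_mul_eq_one_right hchi
  have hBmw : ∀ b x : ZMod n, W.ρ ⟨0,b,0⟩ (w x) = chi ζ (b * x) • w x := by
    intro b x
    rw [hρb]
    have hpow : ∀ m : ℕ, (B ^ m) (w x) = chi ζ x ^ m • w x := by
      intro m
      induction m with
      | zero => simp
      | succ m ih =>
        have h2 : (B ^ (m+1)) (w x) = B ((B ^ m) (w x)) := by rw [pow_succ']; rfl
        rw [h2, ih, map_smul, hBw, smul_smul, pow_succ, mul_comm]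
    rw [hpow b.val, ← chi_natmul hζn b.val x, ZMod.natCast_rightInverse b]
  have hρw : ∀ (g : Heis n) (x : ZMod n),
      W.ρ g (w x) = chi ζ (g.c + g.b * (x - g.a)) • w (x - g.a) := by
    intro g x
    conv_lhs => rw [hdecomp g]
    rw [map_mul, map_mul, Module.End.mul_apply, Module.End.mul_apply, hAw, hBmw, map_smul, hρc,
      chi_add hζn]
    show chi ζ (g.b * (x - g.a)) • (chi ζ g.c • LinearMap.id (w (x - g.a))) = _
    rw [LinearMap.id_apply, smul_smul, mul_comm]
  -- the equivariant map
  refine ⟨{ toFun := fun φ => ∑ x : ZMod n, φ x • w x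
            map_add' := fun φ ψ => by
              simp [add_smul, Finset.sum_add_distrib]
            map_smul' := fun r φ => by
              simp [Finset.smul_sum, smul_smul] }, ?_, ?_⟩
  · -- nonzero
    intro h
    apply hvne
    have h0 := congrArg (fun (T : (ZMod n → k) →ₗ[k] W) => T (delta 0)) h
    simp only [LinearMap.coe_mk, AddHom.coe_mk, LinearMap.zero_apply] at h0
    have hsum : (∑ x : ZMod n, (delta (0 : ZMod n) : ZMod n → k) x • w x) = w 0 := by
      have hterm : ∀ x : ZMod n, (delta (0 : ZMod n) : ZMod n → k) x • w x
          = if (0:ZMod n) = x then w x else 0 := by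
        intro x; by_cases hx : (0:ZMod n) = x <;> simp [delta, hx]
      rw [Finset.sum_congr rfl fun x _ => hterm x, Finset.sum_ite_eq]
      simp
    rw [← hw0, ← hsum]
    exact h0
  · -- equivariance
    intro g φ
    show (∑ x : ZMod n, (heisRep ζ hζ.pow_eq_one g φ) x • w x)
        = W.ρ g (∑ x : ZMod n, φ x • w x)
    rw [map_sum]
    rw [Finset.sum_congr rfl fun x (_ : x ∈ Finset.univ) =>
      (map_smul (W.ρ g) (φ x) (w x) :
        W.ρ g (φ x • w x) = φ x • W.ρ g (w x))]
    refine (Fintype.sum_equiv (Equiv.subRight g.a)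
      (fun x => φ x • W.ρ g (w x))
      (fun x => (heisRep ζ hζ.pow_eq_one g φ) x • w x) (fun x => ?_)).symm
    simp only [Equiv.subRight_apply]
    rw [hρw g x, heisRep_apply, sub_add_cancel, smul_smul, mul_comm (φ x)]


end StoneVN

/-- Let `G` be the Heisenberg group over `ℤ/nℤ` with centre
`N = {(0,0,c)} ≅ ℤ/nℤ`, let `ζ ∈ k` be a primitive `n`-th root of unity, and let
`χ : N → k*` send `(0,0,1)` to `ζ`.  Then there exists an irreducible `n`-dimensional
representation `V_ζ` of `G` on which `N` acts by `χ`; any two irreducible finite-dimensional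
representations of `G` on which `N` acts by `χ` are isomorphic; and every nonzero
finite-dimensional representation of `G` whose restriction to `N` is `χ`-isotypic admits a
nonzero `G`-equivariant morphism from `V_ζ`. -/


theorem stmt_8 (k : Type) [Field k] [CharZero k] (n : ℕ) (hn : 0 < n)
    (ζ : k) (hζ : IsPrimitiveRoot ζ n) :
    (∃ V : FDRep k (Heis n),
      IrredRep V.ρ ∧ Module.finrank k ↥V = n ∧
        V.ρ ⟨0, 0, 1⟩ = ζ • LinearMap.id) ∧
    (∀ V W : FDRep k (Heis n),
      IrredRep V.ρ → V.ρ ⟨0, 0, 1⟩ = ζ • LinearMap.id →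
      IrredRep W.ρ → W.ρ ⟨0, 0, 1⟩ = ζ • LinearMap.id →
      ∃ e : ↥V ≃ₗ[k] ↥W, ∀ (g : Heis n) (v : ↥V), e (V.ρ g v) = W.ρ g (e v)) ∧
    (∀ V W : FDRep k (Heis n),
      IrredRep V.ρ → V.ρ ⟨0, 0, 1⟩ = ζ • LinearMap.id →
      Nontrivial ↥W → W.ρ ⟨0, 0, 1⟩ = ζ • LinearMap.id →
      ∃ f : ↥V →ₗ[k] ↥W, f ≠ 0 ∧ ∀ (g : Heis n) (v : ↥V), f (V.ρ g v) = W.ρ g (f v)) := by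
  haveI : NeZero n := ⟨hn.ne'⟩
  have hζn := hζ.pow_eq_one
  have hmodel_irred : IrredRep (heisRep ζ hζ.pow_eq_one) := heisRep_irred hζ
  -- a helper: transport equivariance through the inverse of a bijective equivariant map
  refine ⟨⟨FDRep.of (heisRep ζ hζ.pow_eq_one), hmodel_irred, ?_, heisRep_center hζ.pow_eq_one⟩,
    ?_, ?_⟩
  · show Module.finrank k (ZMod n → k) = n
    rw [Module.finrank_pi, ZMod.card]
  · -- uniqueness
    intro V W hV hVc hW hWc
    obtain ⟨f₁, hf₁0, hf₁e⟩ := exists_equivariant hζ V hV.1 hVc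
    obtain ⟨f₂, hf₂0, hf₂e⟩ := exists_equivariant hζ W hW.1 hWc
    have hb₁ := equivariant_bijective hmodel_irred hV f₁ hf₁0 hf₁e
    have hb₂ := equivariant_bijective hmodel_irred hW f₂ hf₂0 hf₂e
    let e₁ := LinearEquiv.ofBijective f₁ hb₁
    let e₂ := LinearEquiv.ofBijective f₂ hb₂
    refine ⟨e₁.symm.trans e₂, fun g v => ?_⟩
    have h1 : e₁.symm (V.ρ g v) = heisRep ζ hζ.pow_eq_one g (e₁.symm v) := by
      apply e₁.injective
      rw [LinearEquiv.apply_symm_apply]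
      show V.ρ g v = f₁ (heisRep ζ hζ.pow_eq_one g (e₁.symm v))
      rw [hf₁e]
      congr 1
      exact (e₁.apply_symm_apply v).symm
    show e₂ (e₁.symm (V.ρ g v)) = W.ρ g (e₂ (e₁.symm v))
    rw [h1]
    exact hf₂e g _
  · -- existence of a nonzero morphism
    intro V W hV hVc hWnt hWc
    obtain ⟨f₁, hf₁0, hf₁e⟩ := exists_equivariant hζ V hV.1 hVc
    obtain ⟨f₂, hf₂0, hf₂e⟩ := exists_equivariant hζ W hWnt hWc
    have hb₁ := equivariant_bijective hmodel_irred hV f₁ hf₁0 hf₁e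
    let e₁ := LinearEquiv.ofBijective f₁ hb₁
    refine ⟨f₂.comp e₁.symm.toLinearMap, ?_, fun g v => ?_⟩
    · intro h
      apply hf₂0
      refine LinearMap.ext fun φ => ?_
      have h0 := congrArg (fun (T : ↥V →ₗ[k] ↥W) => T (e₁ φ)) h
      simpa [LinearMap.comp_apply, LinearEquiv.symm_apply_apply] using h0
    · have h1 : e₁.symm (V.ρ g v) = heisRep ζ hζ.pow_eq_one g (e₁.symm v) := by
        apply e₁.injective
        rw [LinearEquiv.apply_symm_apply]
        show V.ρ g v = f₁ (heisRep ζ hζ.pow_eq_one g (e₁.symm v))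
        rw [hf₁e]
        congr 1
        exact (e₁.apply_symm_apply v).symm
      show f₂ (e₁.symm (V.ρ g v)) = W.ρ g (f₂ (e₁.symm v))
      rw [h1]
      exact hf₂e g _
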